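/- If L ∈ ℝ^{m×m} is symmetric positive definite and C ∈ ℝ^{n×n} has positive semidefinite symmetric part (C + Cᵀ ⪰ 0), then the matrix 𝒦 = Iₙ ⊗ L + C ⊗ I_m is invertible. -/

import Mathlib

open Matrix Kronecker

lemma quad_skron {m n : ℕ} (S : Matrix (Fin n) (Fin n) ℝ)
    (x : Fin n × Fin m → ℝ) :
    x ⬝ᵥ (S ⊗ₖ (1 : Matrix (Fin m) (Fin m) ℝ)).mulVec x =
      ∑ j : Fin m, (fun i => x (i, j)) ⬝ᵥ S.mulVec (fun i => x (i, j)) := by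
  simp only [dotProduct, mulVec, kroneckerMap_apply, one_apply, Fintype.sum_prod_type]
  rw [Finset.sum_comm]
  apply Finset.sum_congr rfl
  intro j _
  apply Finset.sum_congr rfl
  intro i _
  congr 1
  apply Finset.sum_congr rfl
  intro k _
  simp [mul_ite, ite_mul]

lemma quad_lkron {m n : ℕ} (L : Matrix (Fin m) (Fin m) ℝ)
    (x : Fin n × Fin m → ℝ) :
    x ⬝ᵥ ((1 : Matrix (Fin n) (Fin n) ℝ) ⊗ₖ L).mulVec x =
      ∑ i : Fin n, (fun j => x (i, j)) ⬝ᵥ L.mulVec (fun j => x (i, j)) := by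
  simp only [dotProduct, mulVec, kroneckerMap_apply, one_apply, Fintype.sum_prod_type]
  apply Finset.sum_congr rfl
  intro i _
  apply Finset.sum_congr rfl
  intro j _
  rw [Finset.sum_eq_single i]
  · simp
  · intro l _ hl
    simp [Ne.symm hl]
  · simp

theorem stmt_18 {m n : ℕ} (L : Matrix (Fin m) (Fin m) ℝ) (C : Matrix (Fin n) (Fin n) ℝ)
    (hL : L.PosDef) (hLsymm : L.IsSymm) (hC : (C + Cᵀ).PosSemidef) :
    IsUnit ((1 : Matrix (Fin n) (Fin n) ℝ) ⊗ₖ L + C ⊗ₖ (1 : Matrix (Fin m) (Fin m) ℝ)) := by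
  set M := (1 : Matrix (Fin n) (Fin n) ℝ) ⊗ₖ L + C ⊗ₖ (1 : Matrix (Fin m) (Fin m) ℝ) with hM
  rw [Matrix.isUnit_iff_isUnit_det, isUnit_iff_ne_zero]
  intro hdet
  obtain ⟨x, hx, hMx⟩ := (Matrix.exists_mulVec_eq_zero_iff).2 hdet
  -- quadratic form of x is zero
  have hquad : x ⬝ᵥ M.mulVec x = 0 := by rw [hMx, dotProduct_zero]
  rw [hM, add_mulVec, dotProduct_add, quad_lkron] at hquad
  -- the C-part is nonnegative
  have hCpart : 0 ≤ x ⬝ᵥ (C ⊗ₖ (1 : Matrix (Fin m) (Fin m) ℝ)).mulVec x := by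
    have hsum : x ⬝ᵥ ((C + Cᵀ) ⊗ₖ (1 : Matrix (Fin m) (Fin m) ℝ)).mulVec x =
        2 * (x ⬝ᵥ (C ⊗ₖ (1 : Matrix (Fin m) (Fin m) ℝ)).mulVec x) := by
      rw [quad_skron, quad_skron]
      rw [Finset.mul_sum]
      congr 1
      ext j
      rw [add_mulVec, dotProduct_add]
      have : (fun i => x (i, j)) ⬝ᵥ Cᵀ.mulVec (fun i => x (i, j)) =
          (fun i => x (i, j)) ⬝ᵥ C.mulVec (fun i => x (i, j)) := by
        rw [mulVec_transpose, dotProduct_comm, dotProduct_mulVec]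
      rw [this]; ring
    have h0 : 0 ≤ x ⬝ᵥ ((C + Cᵀ) ⊗ₖ (1 : Matrix (Fin m) (Fin m) ℝ)).mulVec x := by
      rw [quad_skron]
      apply Finset.sum_nonneg
      intro j _
      have := hC.dotProduct_mulVec_nonneg (fun i => x (i, j))
      simpa using this
    linarith [hsum ▸ h0]
  -- the L-part is positive
  have hLpart : 0 < ∑ i : Fin n, (fun j => x (i, j)) ⬝ᵥ L.mulVec (fun j => x (i, j)) := by
    obtain ⟨⟨i₀, j₀⟩, hij⟩ := Function.ne_iff.1 hx
    apply Finset.sum_pos' ?_ ⟨i₀, Finset.mem_univ _, ?_⟩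
    · intro i _
      have := hL.posSemidef.dotProduct_mulVec_nonneg (fun j => x (i, j))
      simpa using this
    · have hne : (fun j => x (i₀, j)) ≠ 0 := by
        intro h
        exact hij (by simpa using congrFun h j₀)
      have := hL.dotProduct_mulVec_pos hne
      simpa using this
  linarith
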